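/- arXiv:1512.09359 — 3 statements merged into one kernel-verified Lean document; each statement's English description precedes it below -/
import Mathlib

section
/- Let q ≥ 2 be a natural number, let α < β be real numbers, and set S = [α, β]. Let u, v, U, V : ℝ → ℝ be functions such that U and V are (q−1)-times continuously differentiable on S and, for every t ∈ S, the (q−1)-th iterated derivative (within S) of U at t equals u(t) and the (q−1)-th iterated derivative (within S) of V at t equals v(t). Assume u and v are linearly independent as functions on S, i.e., for all reals a, b, if a·u(t) + b·v(t) = 0 for every t ∈ S then a = 0 and b = 0. Suppose a₁, b₁, a₂, b₂ are reals and P₁, P₂ are real polynomials with natDegree P₁ ≤ q−2 and natDegree P₂ ≤ q−2, such that a₁·U(t) + b₁·V(t) + P₁(t) = a₂·U(t) + b₂·V(t) + P₂(t) for every t ∈ S. Then a₁ = a₂, b₁ = b₂, and P₁ = P₂. -/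
lemma contDiff_polyEval (n : WithTop ℕ∞) (P : Polynomial ℝ) : ContDiff ℝ n fun t => P.eval t := by
  induction P using Polynomial.induction_on' with
  | add p r hp hr => simpa using hp.add hr
  | monomial k c =>
      simpa [Polynomial.eval_monomial] using (contDiff_const (c := c)).mul ((contDiff_id (𝕜 := ℝ)).pow k)

lemma poly_iterDerivWithin (s : Set ℝ) (hs : UniqueDiffOn ℝ s) (n : ℕ) (P : Polynomial ℝ) :
    ∀ x ∈ s, iteratedDerivWithin n (fun t => P.eval t) s x =
      (Polynomial.derivative^[n] P).eval x := by
  induction n generalizing P with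
  | zero => simp
  | succ n ih =>
    intro x hx
    rw [iteratedDerivWithin_succ', Function.iterate_succ_apply,
      ← ih P.derivative x hx]
    exact iteratedDerivWithin_congr (fun y hy => Polynomial.derivWithin (p := P) (hs y hy)) hx

/-- Uniqueness of the local GB-spline representation `a·U + b·V + P`
when the knot functions `u`, `v` are linearly independent on `S`. -/
theorem gb_local_rep_unique (q : ℕ) (hq : 2 ≤ q) (α β : ℝ) (hαβ : α < β)
    (u v U V : ℝ → ℝ)
    (hU : ContDiffOn ℝ (q - 1) U (Set.Icc α β))
    (hV : ContDiffOn ℝ (q - 1) V (Set.Icc α β))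
    (hUu : ∀ t ∈ Set.Icc α β, iteratedDerivWithin (q - 1) U (Set.Icc α β) t = u t)
    (hVv : ∀ t ∈ Set.Icc α β, iteratedDerivWithin (q - 1) V (Set.Icc α β) t = v t)
    (hindep : ∀ a b : ℝ, (∀ t ∈ Set.Icc α β, a * u t + b * v t = 0) → a = 0 ∧ b = 0)
    (a₁ b₁ a₂ b₂ : ℝ) (P₁ P₂ : Polynomial ℝ)
    (hP₁ : P₁.natDegree ≤ q - 2) (hP₂ : P₂.natDegree ≤ q - 2)
    (heq : ∀ t ∈ Set.Icc α β,
      a₁ * U t + b₁ * V t + P₁.eval t = a₂ * U t + b₂ * V t + P₂.eval t) :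
    a₁ = a₂ ∧ b₁ = b₂ ∧ P₁ = P₂ := by
  set S := Set.Icc α β with hS
  have hs : UniqueDiffOn ℝ S := uniqueDiffOn_Icc hαβ
  have hcast : ((q - 1 : ℕ) : WithTop ℕ∞) = (q : WithTop ℕ∞) - 1 := by
    have h1 : ((q - 1 : ℕ) : ℕ∞) = (q : ℕ∞) - 1 := by rw [ENat.coe_sub]; rfl
    calc ((q - 1 : ℕ) : WithTop ℕ∞) = (((q - 1 : ℕ) : ℕ∞) : WithTop ℕ∞) := rfl
    _ = (((q : ℕ∞) - 1 : ℕ∞) : WithTop ℕ∞) := by rw [h1]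
    _ = (q : WithTop ℕ∞) - 1 := by rw [WithTop.coe_sub]; rfl
  rw [← hcast] at hU hV
  have hPC : ∀ P : Polynomial ℝ, ContDiffOn ℝ ((q - 1 : ℕ) : WithTop ℕ∞) (fun t => P.eval t) S :=
    fun P => (contDiff_polyEval _ P).contDiffOn
  have key : ∀ (a b : ℝ) (P : Polynomial ℝ), P.natDegree ≤ q - 2 →
      ∀ t ∈ S, iteratedDerivWithin (q - 1)
        (fun x => a * U x + b * V x + P.eval x) S t = a * u t + b * v t := by
    intro a b P hP t ht
    have h1 : ContDiffOn ℝ ((q - 1 : ℕ) : WithTop ℕ∞) (fun x => a * U x) S := hU.const_smul a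
    have h2 : ContDiffOn ℝ ((q - 1 : ℕ) : WithTop ℕ∞) (fun x => b * V x) S := hV.const_smul b
    rw [show (fun x => a * U x + b * V x + P.eval x)
        = ((fun x => a * U x + b * V x) + fun x => P.eval x) from rfl,
      iteratedDerivWithin_add ht hs (h1.add h2 t ht) (hPC P t ht),
      show ((fun x => a * U x + b * V x))
        = ((fun x => a * U x) + fun x => b * V x) from rfl,
      iteratedDerivWithin_add ht hs (h1 t ht) (h2 t ht),
      iteratedDerivWithin_const_mul ht hs a (hU t ht),
      iteratedDerivWithin_const_mul ht hs b (hV t ht),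
      poly_iterDerivWithin S hs _ P t ht, hUu t ht, hVv t ht,
      Polynomial.iterate_derivative_eq_zero (lt_of_le_of_lt hP (by omega))]
    simp
  have hzero : ∀ t ∈ S, (a₁ - a₂) * u t + (b₁ - b₂) * v t = 0 := by
    intro t ht
    have hcong := iteratedDerivWithin_congr
      (f := fun x => a₁ * U x + b₁ * V x + P₁.eval x)
      (g := fun x => a₂ * U x + b₂ * V x + P₂.eval x)
      (n := q - 1) (fun y hy => heq y hy) ht
    rw [key a₁ b₁ P₁ hP₁ t ht, key a₂ b₂ P₂ hP₂ t ht] at hcong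
    linear_combination hcong
  obtain ⟨ha, hb⟩ := hindep _ _ hzero
  have ha' : a₁ = a₂ := by linarith
  have hb' : b₁ = b₂ := by linarith
  refine ⟨ha', hb', ?_⟩
  apply Polynomial.eq_of_infinite_eval_eq
  apply Set.Infinite.mono (s := S)
  · intro t ht
    have := heq t ht
    rw [ha', hb'] at this
    simpa using (by linarith : Polynomial.eval t P₁ = Polynomial.eval t P₂)
  · exact Set.Icc_infinite hαβ
end

section
/- Let q ≥ 2 be a natural number, let α < β be real numbers, and set S = [α, β]. Let u, v, U, V : ℝ → ℝ be functions such that U and V are (q−1)-times continuously differentiable on S and, for every t ∈ S, the (q−1)-th iterated derivative (within S) of U at t equals u(t) and the (q−1)-th iterated derivative (within S) of V at t equals v(t). Assume u and v satisfy the Chebyshev property on S: for all reals a, b with (a, b) ≠ (0, 0), the function t ↦ a·u(t) + b·v(t) has at most one zero in S. Let a, b be reals and P a real polynomial with natDegree P ≤ q−2, and define f(t) = a·U(t) + b·V(t) + P(t). If for every k ≤ q−1 the k-th iterated derivative (within S) of f vanishes both at α and at β, then a = 0, b = 0, and P = 0 (so f is identically zero on S). -/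
open Set Polynomial

lemma poly_contDiff (P : Polynomial ℝ) (n : WithTop ℕ∞) :
    ContDiff ℝ n fun t : ℝ => P.eval t := by
  induction P using Polynomial.induction_on' with
  | add p q hp hq => simpa using hp.add hq
  | monomial k c =>
      simpa [Polynomial.eval_monomial] using contDiff_const.mul (contDiff_id.pow k)

lemma itdw_poly_eval {s : Set ℝ} (hs : UniqueDiffOn ℝ s) (P : Polynomial ℝ) (n : ℕ) :
    Set.EqOn (iteratedDerivWithin n (fun t => P.eval t) s)
      (fun t => ((Polynomial.derivative)^[n] P).eval t) s := by
  induction n generalizing P with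
  | zero => intro x hx; simp
  | succ n IH =>
    intro x hx
    have h1 : Set.EqOn (derivWithin (fun t => P.eval t) s)
        (fun t => (Polynomial.derivative P).eval t) s := by
      intro y hy
      rw [(P.differentiableAt).derivWithin (hs y hy), Polynomial.deriv]
    calc iteratedDerivWithin (n + 1) (fun t => P.eval t) s x
        = iteratedDerivWithin n (derivWithin (fun t => P.eval t) s) s x :=
          by rw [iteratedDerivWithin_succ']
      _ = iteratedDerivWithin n (fun t => (Polynomial.derivative P).eval t) s x :=
          iteratedDerivWithin_congr h1 hx
      _ = (Polynomial.derivative^[n] (Polynomial.derivative P)).eval x := IH _ hx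
      _ = (Polynomial.derivative^[n + 1] P).eval x := by
          rw [Function.iterate_succ_apply]

/-- If the knot functions satisfy the Chebyshev property on `S = [α, β]` and all
derivatives of order `≤ q−1` of the local representation `f = a·U + b·V + P`
vanish at both endpoints, then the representation is identically zero. -/
theorem gb_local_rep_zero (q : ℕ) (hq : 2 ≤ q) (α β : ℝ) (hαβ : α < β)
    (u v U V : ℝ → ℝ)
    (hU : ContDiffOn ℝ (q - 1) U (Set.Icc α β))
    (hV : ContDiffOn ℝ (q - 1) V (Set.Icc α β))
    (hUu : ∀ t ∈ Set.Icc α β, iteratedDerivWithin (q - 1) U (Set.Icc α β) t = u t)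
    (hVv : ∀ t ∈ Set.Icc α β, iteratedDerivWithin (q - 1) V (Set.Icc α β) t = v t)
    (hcheb : ∀ a b : ℝ, (a, b) ≠ (0, 0) →
      Set.Subsingleton {t ∈ Set.Icc α β | a * u t + b * v t = 0})
    (a b : ℝ) (P : Polynomial ℝ) (hP : P.natDegree ≤ q - 2)
    (f : ℝ → ℝ) (hf : ∀ t, f t = a * U t + b * V t + P.eval t)
    (hvanish : ∀ k ≤ q - 1,
      iteratedDerivWithin k f (Set.Icc α β) α = 0 ∧
      iteratedDerivWithin k f (Set.Icc α β) β = 0) :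
    a = 0 ∧ b = 0 ∧ P = 0 := by
  have hS : UniqueDiffOn ℝ (Set.Icc α β) := uniqueDiffOn_Icc hαβ
  have hαmem : α ∈ Set.Icc α β := Set.left_mem_Icc.2 hαβ.le
  have hβmem : β ∈ Set.Icc α β := Set.right_mem_Icc.2 hαβ.le
  have hPlt : P.natDegree < q - 1 := lt_of_le_of_lt hP (by omega)
  have hcast : ((q : WithTop ℕ∞) - 1) = ((q - 1 : ℕ) : WithTop ℕ∞) := by norm_cast
  have hU' : ContDiffOn ℝ ((q - 1 : ℕ) : WithTop ℕ∞) U (Set.Icc α β) := hcast ▸ hU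
  have hV' : ContDiffOn ℝ ((q - 1 : ℕ) : WithTop ℕ∞) V (Set.Icc α β) := hcast ▸ hV
  have hPc : ContDiffOn ℝ ((q - 1 : ℕ) : WithTop ℕ∞) (fun t => P.eval t) (Set.Icc α β) :=
    (poly_contDiff P _).contDiffOn
  have hfeq : f = (fun t => a * U t + b * V t) + (fun t => P.eval t) := by
    funext t; simpa using hf t
  have haU : ContDiffOn ℝ ((q - 1 : ℕ) : WithTop ℕ∞) (fun t => a * U t) (Set.Icc α β) := hU'.const_smul a
  have hbV : ContDiffOn ℝ ((q - 1 : ℕ) : WithTop ℕ∞) (fun t => b * V t) (Set.Icc α β) := hV'.const_smul b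
  -- linearity of the (q-1)-th derivative
  have hsum : ContDiffOn ℝ ((q - 1 : ℕ) : WithTop ℕ∞) (fun t => a * U t + b * V t)
      (Set.Icc α β) := haU.add hbV
  have lin : ∀ t ∈ Set.Icc α β,
      iteratedDerivWithin (q - 1) f (Set.Icc α β) t = a * u t + b * v t := by
    intro t ht
    rw [hfeq, iteratedDerivWithin_add ht hS (hsum t ht) (hPc t ht),
      show (fun t => a * U t + b * V t) = ((fun t => a * U t) + fun t => b * V t) from rfl,
      iteratedDerivWithin_add ht hS (haU t ht) (hbV t ht),
      iteratedDerivWithin_const_mul ht hS a (hU' t ht),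
      iteratedDerivWithin_const_mul ht hS b (hV' t ht),
      hUu t ht, hVv t ht, itdw_poly_eval hS P _ ht,
      Polynomial.iterate_derivative_eq_zero hPlt]
    simp
  -- a = 0 and b = 0
  have keyα : a * u α + b * v α = 0 := by
    rw [← lin α hαmem]; exact (hvanish (q - 1) le_rfl).1
  have keyβ : a * u β + b * v β = 0 := by
    rw [← lin β hβmem]; exact (hvanish (q - 1) le_rfl).2
  have hab : a = 0 ∧ b = 0 := by
    by_contra h
    have hne : (a, b) ≠ (0, 0) := by
      simp only [Prod.mk.injEq, ne_eq]; exact h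
    have := hcheb a b hne ⟨hαmem, keyα⟩ ⟨hβmem, keyβ⟩
    exact absurd this hαβ.ne
  obtain ⟨ha, hb⟩ := hab
  refine ⟨ha, hb, ?_⟩
  -- now f = P.eval
  have hfP : f = fun t => P.eval t := by
    funext t; rw [hf t, ha, hb]; ring
  have hderivs : ∀ k, (Polynomial.derivative^[k] P).eval α = 0 := by
    intro k
    by_cases hk : k ≤ q - 1
    · have := (hvanish k hk).1
      rw [hfP, itdw_poly_eval hS P k hαmem] at this
      exact this
    · rw [Polynomial.iterate_derivative_eq_zero (by omega : P.natDegree < k)]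
      simp
  apply Polynomial.eq_zero_of_hasseDeriv_eq_zero P α
  intro k
  have h1 : (Nat.factorial k : ℝ) * (Polynomial.hasseDeriv k P).eval α
      = (Polynomial.derivative^[k] P).eval α := by
    rw [← Polynomial.factorial_smul_hasseDeriv (R := ℝ) k]
    simp [Polynomial.eval_smul, nsmul_eq_mul]
  have h2 := hderivs k
  rw [← h1] at h2
  have hk0 : (Nat.factorial k : ℝ) ≠ 0 := Nat.cast_ne_zero.2 (Nat.factorial_ne_zero k)
  exact (mul_eq_zero.1 h2).resolve_left hk0
end

section
/- Let t_j < t_{j+1} be real numbers and set S = [t_j, t_{j+1}]. Let A, B : ℝ → ℝ be continuous on S, and let U, V : ℝ → ℝ be functions such that for every t ∈ S, U has derivative A(t) within S at t and V has derivative B(t) within S at t. Let P₁, P₂ be real polynomials, let a₁, b₁, a₂, b₂, c be reals, let δ₁, δ₂ be nonzero reals, and let f₁, f₂ : ℝ → ℝ satisfy f₁(s) = P₁(s) + a₁·A(s) + b₁·B(s) and f₂(s) = P₂(s) + a₂·A(s) + b₂·B(s) for every s ∈ S. Suppose g : ℝ → ℝ satisfies, for every t ∈ S, g(t) = c + δ₁⁻¹·(∫_{t_j}^{t}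 f₁(s) ds) − δ₂⁻¹·(∫_{t_j}^{t} f₂(s) ds). Then there exists a real polynomial Q with natDegree Q ≤ max(natDegree P₁, natDegree P₂) + 1 such that for every t ∈ S, g(t) = Q(t) + (a₁/δ₁ − a₂/δ₂)·U(t) + (b₁/δ₁ − b₂/δ₂)·V(t). -/
open Polynomial intervalIntegral Set

noncomputable def pint (P : Polynomial ℝ) : Polynomial ℝ :=
  P.sum fun n a => C (a / (n + 1 : ℝ)) * X ^ (n + 1)

lemma pint_deriv (P : Polynomial ℝ) : (pint P).derivative = P := by
  unfold pint
  rw [Polynomial.sum, derivative_sum]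
  conv_rhs => rw [← Polynomial.sum_C_mul_X_pow_eq P]
  rw [Polynomial.sum]
  refine Finset.sum_congr rfl fun n _ => ?_
  have hn : ((n : ℝ) + 1) ≠ 0 := by positivity
  rw [derivative_C_mul, derivative_X_pow]
  simp only [Nat.add_sub_cancel]
  rw [mul_comm (C (↑(n+1) : ℝ)), ← mul_assoc, mul_comm _ (X ^ n : ℝ[X]), mul_assoc, ← C_mul,
    mul_comm (X ^ n : ℝ[X])]
  push_cast
  rw [div_mul_cancel₀ _ hn]

lemma pint_natDegree (P : Polynomial ℝ) : (pint P).natDegree ≤ P.natDegree + 1 := by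
  unfold pint
  rw [Polynomial.sum]
  refine Polynomial.natDegree_sum_le_of_forall_le _ _ fun n hn => ?_
  calc (C (P.coeff n / (n + 1 : ℝ)) * X ^ (n + 1)).natDegree
      ≤ (C (P.coeff n / (n + 1 : ℝ))).natDegree + (X ^ (n+1) : Polynomial ℝ).natDegree :=
        natDegree_mul_le
    _ ≤ n + 1 := by simp [Polynomial.natDegree_X_pow]
    _ ≤ P.natDegree + 1 := by
        have := Polynomial.le_natDegree_of_mem_supp n hn
        omega

lemma ftc_icc {a b : ℝ} (f F : ℝ → ℝ)
    (hf : ContinuousOn f (Icc a b))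
    (hF : ∀ t ∈ Icc a b, HasDerivWithinAt F (f t) (Icc a b) t)
    {t : ℝ} (ht : t ∈ Icc a b) :
    ∫ s in a..t, f s = F t - F a := by
  have hab : a ≤ t := ht.1
  refine integral_eq_sub_of_hasDeriv_right_of_le hab ?_ ?_ ?_
  · exact fun x hx => ((hF x ⟨hx.1, hx.2.trans ht.2⟩).continuousWithinAt).mono
      (Icc_subset_Icc le_rfl ht.2)
  · intro x hx
    have hx' : x ∈ Icc a b := ⟨hx.1.le, hx.2.le.trans ht.2⟩
    refine (hF x hx').mono_of_mem_nhdsWithin ?_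
    refine mem_nhdsWithin_of_mem_nhds (Icc_mem_nhds ?_ ?_)
    · exact hx.1
    · exact lt_of_lt_of_le hx.2 ht.2
  · exact (hf.mono (Icc_subset_Icc le_rfl ht.2)).intervalIntegrable_of_Icc hab

/-- The inductive step of the GB-spline local-representation recurrence: integrating
the combination `Φ = c + δ₁⁻¹ ∫ f₁ − δ₂⁻¹ ∫ f₂` of local representations
`fᵢ = Pᵢ + aᵢ·A + bᵢ·B` yields a local representation in terms of the
antiderivatives `U`, `V` of `A`, `B`, with polynomial part of one higher degree. -/
theorem gb_recurrence_step (tj tj1 : ℝ) (h : tj < tj1)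
    (A B U V : ℝ → ℝ)
    (hA : ContinuousOn A (Set.Icc tj tj1))
    (hB : ContinuousOn B (Set.Icc tj tj1))
    (hU : ∀ t ∈ Set.Icc tj tj1, HasDerivWithinAt U (A t) (Set.Icc tj tj1) t)
    (hV : ∀ t ∈ Set.Icc tj tj1, HasDerivWithinAt V (B t) (Set.Icc tj tj1) t)
    (P₁ P₂ : Polynomial ℝ) (a₁ b₁ a₂ b₂ c : ℝ) (δ₁ δ₂ : ℝ)
    (hδ₁ : δ₁ ≠ 0) (hδ₂ : δ₂ ≠ 0)
    (f₁ f₂ g : ℝ → ℝ)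
    (hf₁ : ∀ s ∈ Set.Icc tj tj1, f₁ s = P₁.eval s + a₁ * A s + b₁ * B s)
    (hf₂ : ∀ s ∈ Set.Icc tj tj1, f₂ s = P₂.eval s + a₂ * A s + b₂ * B s)
    (hg : ∀ t ∈ Set.Icc tj tj1,
      g t = c + δ₁⁻¹ * (∫ s in tj..t, f₁ s) - δ₂⁻¹ * (∫ s in tj..t, f₂ s)) :
    ∃ Q : Polynomial ℝ, Q.natDegree ≤ max P₁.natDegree P₂.natDegree + 1 ∧
      ∀ t ∈ Set.Icc tj tj1,
        g t = Q.eval t + (a₁ / δ₁ - a₂ / δ₂) * U t + (b₁ / δ₁ - b₂ / δ₂) * V t := by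
  set kA := a₁ / δ₁ - a₂ / δ₂ with hkA
  set kB := b₁ / δ₁ - b₂ / δ₂ with hkB
  refine ⟨C (c - δ₁⁻¹ * (pint P₁).eval tj + δ₂⁻¹ * (pint P₂).eval tj - kA * U tj - kB * V tj)
      + C δ₁⁻¹ * pint P₁ - C δ₂⁻¹ * pint P₂, ?_, ?_⟩
  · refine (natDegree_sub_le _ _).trans (max_le ((natDegree_add_le _ _).trans (max_le ?_ ?_)) ?_)
    · simp only [← C_mul, ← C_sub, ← C_add, natDegree_C]; simp
    · exact (natDegree_C_mul_le _ _).trans ((pint_natDegree P₁).trans (by omega))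
    · exact (natDegree_C_mul_le _ _).trans ((pint_natDegree P₂).trans (by omega))
  · intro t ht
    have hsub : Set.Icc tj t ⊆ Set.Icc tj tj1 := Set.Icc_subset_Icc le_rfl ht.2
    have huIcc : Set.uIcc tj t = Set.Icc tj t := Set.uIcc_of_le ht.1
    -- integrability
    have hAint : IntervalIntegrable A MeasureTheory.volume tj t :=
      (hA.mono hsub).intervalIntegrable_of_Icc ht.1
    have hBint : IntervalIntegrable B MeasureTheory.volume tj t :=
      (hB.mono hsub).intervalIntegrable_of_Icc ht.1
    have hP1int : IntervalIntegrable (fun s => P₁.eval s) MeasureTheory.volume tj t :=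
      (P₁.continuous).intervalIntegrable _ _
    have hP2int : IntervalIntegrable (fun s => P₂.eval s) MeasureTheory.volume tj t :=
      (P₂.continuous).intervalIntegrable _ _
    have hPoly : ∀ P : Polynomial ℝ,
        (∫ s in tj..t, P.eval s) = (pint P).eval t - (pint P).eval tj := by
      intro P
      refine intervalIntegral.integral_eq_sub_of_hasDerivAt (f := fun x => (pint P).eval x) (fun x _ => ?_)
        ((P.continuous).intervalIntegrable _ _)
      have := (pint P).hasDerivAt x
      rwa [pint_deriv] at this
    have hIA : (∫ s in tj..t, A s) = U t - U tj := ftc_icc A U hA hU ht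
    have hIB : (∫ s in tj..t, B s) = V t - V tj := ftc_icc B V hB hV ht
    have split : ∀ (P : Polynomial ℝ) (a b : ℝ) (f : ℝ → ℝ),
        (∀ s ∈ Set.Icc tj tj1, f s = P.eval s + a * A s + b * B s) →
        (∫ s in tj..t, f s) = ((pint P).eval t - (pint P).eval tj)
          + a * (U t - U tj) + b * (V t - V tj) := by
      intro P a b f hf
      have : (∫ s in tj..t, f s)
          = ∫ s in tj..t, (P.eval s + a * A s + b * B s) := by
        refine intervalIntegral.integral_congr fun s hs => ?_
        exact hf s (hsub (huIcc ▸ hs))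
      rw [this, intervalIntegral.integral_add, intervalIntegral.integral_add,
        intervalIntegral.integral_const_mul, intervalIntegral.integral_const_mul,
        hPoly, hIA, hIB]
      · exact (P.continuous).intervalIntegrable _ _
      · exact hAint.const_mul a
      · exact ((P.continuous).intervalIntegrable _ _).add (hAint.const_mul a)
      · exact hBint.const_mul b
    rw [hg t ht, split P₁ a₁ b₁ f₁ hf₁, split P₂ a₂ b₂ f₂ hf₂]
    simp only [eval_add, eval_sub, eval_mul, eval_C, hkA, hkB]
    field_simp
    ring
end
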